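/- Let V be a finite-dimensional real representation of SL(2,ℝ) with weight decomposition for the diagonal subgroup A = {diag(eᵗ,e⁻ᵗ)}. If v ∈ V is a nonzero vector with λ^max(v) < 0 (i.e., all nonzero weight components of v have negative weight), then for every r ≠ 0, λ^max(u(r)v) > 0; i.e., u(r)v has a nonzero component of strictly positive weight. -/

import Mathlib

open Filter Topology

noncomputable section

namespace Stmt3Aux

abbrev SL2 := Matrix.SpecialLinearGroup (Fin 2) ℝ

def us (s : ℝ) : SL2 := ⟨!![1, s; 0, 1], by simp [Matrix.det_fin_two_of]⟩

def ls (s : ℝ) : SL2 := ⟨!![1, 0; s, 1], by simp [Matrix.det_fin_two_of]⟩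

set_option linter.unnecessarySeqFocus false

lemma us_mul (s s' : ℝ) : us s * us s' = us (s + s') := by
  apply Subtype.ext
  show (us s : Matrix (Fin 2) (Fin 2) ℝ) * (us s' : _) = _
  simp only [us, Matrix.mul_fin_two]
  norm_num [add_comm]

lemma ls_mul (s s' : ℝ) : ls s * ls s' = ls (s + s') := by
  apply Subtype.ext
  show (ls s : Matrix (Fin 2) (Fin 2) ℝ) * (ls s' : _) = _
  simp only [ls, Matrix.mul_fin_two]
  norm_num [add_comm]

lemma us_zero : us 0 = 1 := by
  apply Subtype.ext
  show (us 0 : Matrix (Fin 2) (Fin 2) ℝ) = 1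
  simp [us, Matrix.one_fin_two]

lemma ls_zero : ls 0 = 1 := by
  apply Subtype.ext
  show (ls 0 : Matrix (Fin 2) (Fin 2) ℝ) = 1
  simp [ls, Matrix.one_fin_two]



lemma conj_us (a : ℝ → SL2)
    (ha : ∀ t, (a t : Matrix (Fin 2) (Fin 2) ℝ) = !![Real.exp t, 0; 0, Real.exp (-t)])
    (t s : ℝ) : a t * us s * a (-t) = us (Real.exp (2*t) * s) := by
  have e1 : Real.exp t * Real.exp (-t) = 1 := by rw [← Real.exp_add]; simp
  have e2 : Real.exp (-t) * Real.exp t = 1 := by rw [← Real.exp_add]; simp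
  have e3 : Real.exp t * s * Real.exp t = Real.exp (2*t) * s := by
    rw [two_mul, Real.exp_add]; ring
  apply Subtype.ext
  simp only [Matrix.SpecialLinearGroup.coe_mul]
  simp only [Matrix.SpecialLinearGroup.coe_mul, ha, us, Matrix.mul_fin_two]
  norm_num [e1, e2, e3]

lemma conj_ls (a : ℝ → SL2)
    (ha : ∀ t, (a t : Matrix (Fin 2) (Fin 2) ℝ) = !![Real.exp t, 0; 0, Real.exp (-t)])
    (t s : ℝ) : a t * ls s * a (-t) = ls (Real.exp (-(2*t)) * s) := by
  have e1 : Real.exp t * Real.exp (-t) = 1 := by rw [← Real.exp_add]; simp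
  have e2 : Real.exp (-t) * Real.exp t = 1 := by rw [← Real.exp_add]; simp
  have e3 : Real.exp (-t) * s * Real.exp (-t) = Real.exp (-(2*t)) * s := by
    have : Real.exp (-(2*t)) = Real.exp (-t) * Real.exp (-t) := by
      rw [← Real.exp_add]; ring_nf
    rw [this]; ring
  apply Subtype.ext
  simp only [Matrix.SpecialLinearGroup.coe_mul]
  simp only [Matrix.SpecialLinearGroup.coe_mul, ha, ls, Matrix.mul_fin_two]
  norm_num [e1, e2, e3]

lemma w_swap (a : ℝ → SL2)
    (ha : ∀ t, (a t : Matrix (Fin 2) (Fin 2) ℝ) = !![Real.exp t, 0; 0, Real.exp (-t)])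
    (r : ℝ) (hr : r ≠ 0) (t : ℝ) :
    (us r * ls (-1/r) * us r) * a t = a (-t) * (us r * ls (-1/r) * us r) := by
  apply Subtype.ext
  simp only [Matrix.SpecialLinearGroup.coe_mul]
  simp only [Matrix.SpecialLinearGroup.coe_mul, ha, us, ls, Matrix.mul_fin_two]
  ext i j
  fin_cases i <;> fin_cases j <;> field_simp <;> ring_nf



variable {V : Type*} [AddCommGroup V] [Module ℝ V]

/-- Linear independence of power functions `c ^ μ` on `(0,∞)`, vector-valued. -/
lemma indep (S : Finset ℤ) (z : ℤ → V)
    (h : ∀ c : ℝ, 0 < c → ∑ μ ∈ S, (c ^ (μ : ℤ)) • z μ = 0) :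
    ∀ μ ∈ S, z μ = 0 := by
  intro μ0 hμ0
  rw [← Module.forall_dual_apply_eq_zero_iff ℝ]
  intro φ
  set N : ℤ := -(S.min' ⟨μ0, hμ0⟩) with hN
  have hnn : ∀ μ ∈ S, 0 ≤ μ + N := fun μ hμ => by
    have := S.min'_le μ hμ; omega
  set p : Polynomial ℝ := ∑ μ ∈ S, Polynomial.C (φ (z μ)) * Polynomial.X ^ (μ + N).toNat with hp
  have hroots : ∀ c : ℝ, 0 < c → p.eval c = 0 := by
    intro c hc
    have h2 := congrArg φ (h c hc)
    rw [map_sum, map_zero] at h2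
    have h3 : ∀ μ ∈ S, φ ((c ^ (μ:ℤ)) • z μ) = c ^ (μ:ℤ) * φ (z μ) := fun μ _ => map_smul φ _ _
    rw [Finset.sum_congr rfl h3] at h2
    have : p.eval c = c ^ N * ∑ μ ∈ S, c ^ (μ:ℤ) * φ (z μ) := by
      rw [hp, Polynomial.eval_finset_sum, Finset.mul_sum]
      refine Finset.sum_congr rfl fun μ hμ => ?_
      simp only [Polynomial.eval_mul, Polynomial.eval_C, Polynomial.eval_pow, Polynomial.eval_X]
      rw [← zpow_natCast c, Int.toNat_of_nonneg (hnn μ hμ), zpow_add₀ (ne_of_gt hc)]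
      ring
    rw [this, h2, mul_zero]
  have hp0 : p = 0 := by
    apply Polynomial.eq_zero_of_infinite_isRoot
    apply Set.Infinite.mono (s := Set.Ioi (0:ℝ))
    · exact fun c hc => hroots c hc
    · exact Set.Ioi_infinite 0
  have hcoeff : p.coeff (μ0 + N).toNat = φ (z μ0) := by
    rw [hp, Polynomial.finset_sum_coeff]
    rw [Finset.sum_congr rfl (fun μ hμ => Polynomial.coeff_C_mul_X_pow (φ (z μ)) _ _)]
    rw [Finset.sum_eq_single_of_mem μ0 hμ0]
    · simp
    · intro μ hμ hne
      rw [if_neg]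
      have h1 := hnn μ hμ
      have h2 := hnn μ0 hμ0
      omega
  rw [hp0] at hcoeff
  simpa using hcoeff.symm


lemma tendsto_zpow_mul (e : ℤ) (A : ℝ) (h : e < 0 → A = 0) :
    Tendsto (fun c : ℝ => c ^ e * A) (𝓝[>] 0) (𝓝 (if e = 0 then A else 0)) := by
  rcases lt_trichotomy e 0 with he | he | he
  · rw [h he]
    simp only [mul_zero, if_neg (by omega : ¬ e = 0)]
    exact tendsto_const_nhds
  · subst he; simp only [zpow_zero, one_mul, if_pos rfl]; exact tendsto_const_nhds
  · rw [if_neg (by omega : ¬ e = 0)]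
    have hfun : ∀ c : ℝ, c ^ e * A = c ^ e.toNat * A := by
      intro c; rw [← zpow_natCast c, Int.toNat_of_nonneg (le_of_lt he)]
    simp only [hfun]
    have : Tendsto (fun c : ℝ => c ^ e.toNat * A) (𝓝 0) (𝓝 ((0:ℝ) ^ e.toNat * A)) := by
      exact ((continuous_pow e.toNat).continuousAt).mul continuousAt_const
    rw [zero_pow (by omega : e.toNat ≠ 0), zero_mul] at this
    exact this.mono_left nhdsWithin_le_nhds

lemma tendsto_sqrt_zpow_mul (e : ℤ) (A : ℝ) :
    Tendsto (fun c : ℝ => (Real.sqrt (c^2+1)) ^ e * A) (𝓝[>] 0) (𝓝 A) := by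
  have h1 : ContinuousAt (fun c : ℝ => Real.sqrt (c^2+1)) 0 :=
    (Real.continuous_sqrt.comp (by continuity)).continuousAt
  have h0 : Real.sqrt ((0:ℝ)^2+1) = 1 := by norm_num
  have h1' : Tendsto (fun c : ℝ => Real.sqrt (c^2+1)) (𝓝 0) (𝓝 1) := by
    have := h1.tendsto
    rwa [h0] at this
  have h2 : Tendsto (fun x : ℝ => x ^ e) (𝓝 1) (𝓝 ((1:ℝ) ^ e)) :=
    (continuousAt_zpow₀ 1 e (Or.inl one_ne_zero)).tendsto
  have h3 : Tendsto (fun c : ℝ => (Real.sqrt (c^2+1)) ^ e) (𝓝 0) (𝓝 1) := by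
    have := h2.comp h1'
    simpa [Function.comp_def] using this
  have h4 := h3.mul_const A
  rw [one_mul] at h4
  exact h4.mono_left nhdsWithin_le_nhds

lemma lim_sum {ι : Type*} (s : Finset ι) (e : ι → ℤ) (A : ι → ℝ)
    (h : ∀ i ∈ s, e i < 0 → A i = 0) :
    Tendsto (fun c : ℝ => ∑ i ∈ s, c ^ (e i) * A i) (𝓝[>] 0)
      (𝓝 (∑ i ∈ s, if e i = 0 then A i else 0)) :=
  tendsto_finset_sum s (fun i hi => tendsto_zpow_mul (e i) (A i) (h i hi))

lemma lim_sqrt {ι : Type*} (s : Finset ι) (e : ι → ℤ) (A : ι → ℝ) :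
    Tendsto (fun c : ℝ => ∑ i ∈ s, (Real.sqrt (c^2+1)) ^ (e i) * A i) (𝓝[>] 0)
      (𝓝 (∑ i ∈ s, A i)) :=
  tendsto_finset_sum s (fun i _ => tendsto_sqrt_zpow_mul (e i) (A i))


lemma tri_diag (π : ℤ → V →ₗ[ℝ] V) (S : Finset ℤ)
    (hdecomp : ∀ w : V, ∑ lam ∈ S, π lam w = w)
    (horth : ∀ μ ν : ℤ, μ ≠ ν → ∀ x : V, π μ (π ν x) = 0)
    (hdiag : ∀ ν : ℤ, ∀ x : V, π ν (π ν x) = π ν x)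
    (hC : ∀ lam ∉ S, ∀ x : V, π lam x = 0)
    (R : V →ₗ[ℝ] V) (hsurj : Function.Surjective R)
    (hexp : ∀ c : ℝ, 0 < c → ∀ z : V,
      ∑ p ∈ S ×ˢ S, ((c : ℝ) ^ (p.1 - p.2 : ℤ)) • π p.1 (R (π p.2 (R z)))
      = ∑ p ∈ S ×ˢ S, ((Real.sqrt (c^2+1)) ^ (p.1 - p.2 : ℤ)) • π p.1 (R (π p.2 z))) :
    (∀ μ ν : ℤ, μ < ν → ∀ x : V, π μ (R (π ν x)) = 0)
      ∧ (∀ ν : ℤ, ∀ x : V, π ν (R (π ν x)) = π ν x) := by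
  classical
  -- Step 1: triangularity on S
  have hTriS : ∀ μ ∈ S, ∀ ν ∈ S, μ < ν → ∀ x : V, π μ (R (π ν x)) = 0 := by
    by_contra hMM
    push_neg at hMM
    obtain ⟨μ1, hμ1, ν1, hν1, hlt1, x1, hx1⟩ := hMM
    set M : Finset (ℤ × ℤ) :=
      (S ×ˢ S).filter (fun p => p.1 < p.2 ∧ ∃ x : V, π p.1 (R (π p.2 x)) ≠ 0) with hM
    have hMne : M.Nonempty := ⟨(μ1, ν1), by
      rw [hM, Finset.mem_filter]
      exact ⟨Finset.mem_product.2 ⟨hμ1, hν1⟩, hlt1, x1, hx1⟩⟩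
    set m : ℤ := (M.image fun p => p.2 - p.1).max' (hMne.image _) with hm
    obtain ⟨p0, hp0M, hp0m⟩ : ∃ p0 ∈ M, p0.2 - p0.1 = m := by
      have := (M.image fun p => p.2 - p.1).max'_mem (hMne.image _)
      rw [← hm, Finset.mem_image] at this
      obtain ⟨p0, h1, h2⟩ := this
      exact ⟨p0, h1, h2⟩
    rw [hM, Finset.mem_filter] at hp0M
    obtain ⟨hp0SS, hp0lt, x0, hx0⟩ := hp0M
    have hm_pos : 0 < m := by omega
    have hbig : ∀ p ∈ S ×ˢ S, m < p.2 - p.1 → ∀ x : V, π p.1 (R (π p.2 x)) = 0 := by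
      intro p hp hgt
      by_contra hne
      push_neg at hne
      obtain ⟨x, hx⟩ := hne
      have hpM : p ∈ M := by
        rw [hM, Finset.mem_filter]
        exact ⟨hp, by omega, x, hx⟩
      have : p.2 - p.1 ≤ m :=
        Finset.le_max' (M.image fun p => p.2 - p.1) (p.2 - p.1)
          (Finset.mem_image_of_mem _ hpM)
      omega
    -- the key claim
    have claim : ∀ y : V,
        ∑ p ∈ (S ×ˢ S).filter (fun p => p.2 - p.1 = m), π p.1 (R (π p.2 y)) = 0 := by
      intro y
      obtain ⟨x, rfl⟩ := hsurj y
      rw [← Module.forall_dual_apply_eq_zero_iff ℝ]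
      intro φ
      set A1 : ℤ × ℤ → ℝ := fun p => φ (π p.1 (R (π p.2 (R x)))) with hA1
      set A2 : ℤ × ℤ → ℝ := fun p => φ (π p.1 (R (π p.2 x))) with hA2
      have hEq : ∀ c ∈ Set.Ioi (0:ℝ),
          (∑ p ∈ S ×ˢ S, c ^ (m + p.1 - p.2) * A1 p)
          = c ^ m * ∑ p ∈ S ×ˢ S, (Real.sqrt (c^2+1)) ^ (p.1 - p.2) * A2 p := by
        intro c hc
        have hcpos : (0:ℝ) < c := hc
        have h2 := congrArg φ (hexp c hc x)
        simp only [map_sum, map_smul, smul_eq_mul] at h2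
        calc ∑ p ∈ S ×ˢ S, c ^ (m + p.1 - p.2) * A1 p
            = ∑ p ∈ S ×ˢ S, c ^ m * (c ^ (p.1 - p.2) * A1 p) := by
              refine Finset.sum_congr rfl fun p _ => ?_
              rw [← mul_assoc, ← zpow_add₀ (ne_of_gt hcpos)]
              congr 2
              omega
          _ = c ^ m * ∑ p ∈ S ×ˢ S, c ^ (p.1 - p.2) * A1 p := by rw [Finset.mul_sum]
          _ = c ^ m * ∑ p ∈ S ×ˢ S, (Real.sqrt (c^2+1)) ^ (p.1 - p.2) * A2 p := by
              simp only [hA1, hA2]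
              rw [h2]
      have hL1 := lim_sum (S ×ˢ S) (fun p => m + p.1 - p.2) A1 (by
        intro p hp hlt
        have hlt' : m + p.1 - p.2 < 0 := hlt
        show φ (π p.1 (R (π p.2 (R x)))) = 0
        rw [hbig p hp (by omega) (R x), map_zero])
      have hL2 : Tendsto
          (fun c : ℝ => c ^ m * ∑ p ∈ S ×ˢ S, (Real.sqrt (c^2+1)) ^ (p.1 - p.2) * A2 p)
          (𝓝[>] 0) (𝓝 0) := by
        have t1 := tendsto_zpow_mul m 1 (fun h => absurd h (by omega))
        rw [if_neg (by omega : ¬ m = 0)] at t1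
        simp only [mul_one] at t1
        have t2 := lim_sqrt (S ×ˢ S) (fun p => p.1 - p.2) A2
        have := t1.mul t2
        rwa [zero_mul] at this
      have hL1' : Tendsto
          (fun c : ℝ => c ^ m * ∑ p ∈ S ×ˢ S, (Real.sqrt (c^2+1)) ^ (p.1 - p.2) * A2 p)
          (𝓝[>] 0) (𝓝 (∑ p ∈ S ×ˢ S, if m + p.1 - p.2 = 0 then A1 p else 0)) := by
        refine hL1.congr' ?_
        filter_upwards [self_mem_nhdsWithin] with c hc
        exact hEq c hc
      have huniq := tendsto_nhds_unique hL1' hL2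
      have hsum : ∑ p ∈ (S ×ˢ S).filter (fun p => p.2 - p.1 = m), A1 p = 0 := by
        calc ∑ p ∈ (S ×ˢ S).filter (fun p => p.2 - p.1 = m), A1 p
            = ∑ p ∈ S ×ˢ S, if m + p.1 - p.2 = 0 then A1 p else 0 := by
              rw [Finset.sum_filter]
              exact Finset.sum_congr rfl fun p _ => if_congr (by omega) rfl rfl
          _ = 0 := huniq
      rw [map_sum]
      exact hsum
    -- derive contradiction from claim
    have hz := claim (π p0.2 x0)
    have hz2 := congrArg (π p0.1) hz
    rw [map_sum, map_zero] at hz2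
    have hsingle : ∀ p ∈ (S ×ˢ S).filter (fun p => p.2 - p.1 = m), p ≠ p0 →
        π p0.1 (π p.1 (R (π p.2 (π p0.2 x0)))) = 0 := by
      intro p hp hne
      rcases eq_or_ne p.2 p0.2 with h2 | h2
      · exfalso
        apply hne
        rw [Finset.mem_filter] at hp
        have hpm : p.2 - p.1 = m := hp.2
        have : p.1 = p0.1 := by omega
        exact Prod.ext this h2
      · rw [horth p.2 p0.2 h2 x0, map_zero, map_zero, map_zero]
    have hp0f : p0 ∈ (S ×ˢ S).filter (fun p => p.2 - p.1 = m) :=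
      Finset.mem_filter.2 ⟨hp0SS, hp0m⟩
    rw [Finset.sum_eq_single_of_mem p0 hp0f hsingle] at hz2
    rw [hdiag, hdiag] at hz2
    exact hx0 hz2
  have hTri : ∀ μ ν : ℤ, μ < ν → ∀ x : V, π μ (R (π ν x)) = 0 := by
    intro μ ν hlt x
    by_cases hμ : μ ∈ S
    · by_cases hν : ν ∈ S
      · exact hTriS μ hμ ν hν hlt x
      · rw [hC ν hν, map_zero, map_zero]
    · exact hC μ hμ _
  refine ⟨hTri, ?_⟩
  -- Step 2: diagonal is identity
  have claim2 : ∀ y : V, ∑ μ ∈ S, π μ (R (π μ y)) = y := by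
    intro y
    obtain ⟨x, rfl⟩ := hsurj y
    rw [← sub_eq_zero, ← Module.forall_dual_apply_eq_zero_iff ℝ]
    intro φ
    rw [map_sub, sub_eq_zero]
    set A1 : ℤ × ℤ → ℝ := fun p => φ (π p.1 (R (π p.2 (R x)))) with hA1
    set A2 : ℤ × ℤ → ℝ := fun p => φ (π p.1 (R (π p.2 x))) with hA2
    have hEq : ∀ c ∈ Set.Ioi (0:ℝ),
        (∑ p ∈ S ×ˢ S, c ^ (p.1 - p.2) * A1 p)
        = ∑ p ∈ S ×ˢ S, (Real.sqrt (c^2+1)) ^ (p.1 - p.2) * A2 p := by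
      intro c hc
      have h2 := congrArg φ (hexp c hc x)
      simpa only [map_sum, map_smul, smul_eq_mul] using h2
    have hL1 := lim_sum (S ×ˢ S) (fun p => p.1 - p.2) A1 (by
      intro p hp hlt
      have hlt' : p.1 - p.2 < 0 := hlt
      show φ (π p.1 (R (π p.2 (R x)))) = 0
      rw [hTri p.1 p.2 (by omega) (R x), map_zero])
    have hL2' := lim_sqrt (S ×ˢ S) (fun p => p.1 - p.2) A2
    have hL1' : Tendsto (fun c : ℝ => ∑ p ∈ S ×ˢ S, (Real.sqrt (c^2+1)) ^ (p.1 - p.2) * A2 p)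
        (𝓝[>] 0) (𝓝 (∑ p ∈ S ×ˢ S, if p.1 - p.2 = 0 then A1 p else 0)) := by
      refine hL1.congr' ?_
      filter_upwards [self_mem_nhdsWithin] with c hc
      exact hEq c hc
    have huniq := tendsto_nhds_unique hL1' hL2'
    -- LHS diag sum
    have hdiagsum : (∑ p ∈ S ×ˢ S, if p.1 - p.2 = 0 then A1 p else 0)
        = φ (∑ μ ∈ S, π μ (R (π μ (R x)))) := by
      rw [map_sum, Finset.sum_product]
      refine Finset.sum_congr rfl fun μ hμ => ?_
      have : ∀ ν ∈ S, (if (μ, ν).1 - (μ, ν).2 = 0 then A1 (μ, ν) else 0)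
          = if μ = ν then A1 (μ, ν) else 0 :=
        fun ν _ => if_congr (by simp; omega) rfl rfl
      rw [Finset.sum_congr rfl this, Finset.sum_ite_eq S μ (fun ν => A1 (μ, ν)), if_pos hμ]
    have hRx : (∑ p ∈ S ×ˢ S, A2 p) = φ (R x) := by
      rw [← map_sum, Finset.sum_product]
      congr 1
      rw [Finset.sum_comm]
      have : ∀ ν ∈ S, ∑ μ ∈ S, π μ (R (π ν x)) = R (π ν x) := fun ν _ => hdecomp _
      rw [Finset.sum_congr rfl this, ← map_sum, hdecomp]
    rw [hdiagsum, hRx] at huniq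
    exact huniq
  intro ν x
  by_cases hν : ν ∈ S
  · have h1 := congrArg (π ν) (claim2 x)
    rw [map_sum] at h1
    rw [Finset.sum_eq_single_of_mem ν hν
      (fun μ hμ hne => horth ν μ (Ne.symm hne) (R (π μ x)))] at h1
    rw [hdiag] at h1
    exact h1
  · simp [hC ν hν]

lemma hpow (μ : ℤ) (c : ℝ) (hc : 0 < c) : Real.exp ((μ:ℝ) * Real.log c) = c ^ μ := by
  rw [← Real.rpow_intCast c μ, Real.rpow_def_of_pos hc, mul_comm]

section Main

variable (ρ : SL2 →* (V →ₗ[ℝ] V)) (π : ℤ → (V →ₗ[ℝ] V)) (S : Finset ℤ)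
    (hdecomp : ∀ w : V, ∑ lam ∈ S, π lam w = w)
    (a : ℝ → SL2)
    (ha : ∀ t, (a t : Matrix (Fin 2) (Fin 2) ℝ) = !![Real.exp t, 0; 0, Real.exp (-t)])
    (hweight : ∀ (t : ℝ) (lam : ℤ) (w : V),
      ρ (a t) (π lam w) = Real.exp ((lam : ℝ) * t) • π lam w)

include hdecomp hweight

lemma hA : ∀ (t : ℝ) (x : V), ρ (a t) x = ∑ μ ∈ S, Real.exp ((μ:ℝ) * t) • π μ x := by
  intro t x
  conv_lhs => rw [← hdecomp x]
  rw [map_sum]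
  exact Finset.sum_congr rfl fun μ _ => hweight t μ x

lemma heig : ∀ (ν : ℤ) (y : V), (∀ t, ρ (a t) y = Real.exp ((ν:ℝ) * t) • y) →
    (∀ μ ∈ S, μ ≠ ν → π μ y = 0) ∧ (ν ∉ S → y = 0) := by
  intro ν y hy
  have key := indep (insert ν S)
    (fun μ => (if μ ∈ S then π μ y else 0) - (if μ = ν then y else 0)) (by
      intro c hc
      have h1 : ∑ μ ∈ insert ν S, (c ^ (μ:ℤ)) • (if μ ∈ S then π μ y else 0)
          = ∑ μ ∈ S, (c ^ (μ:ℤ)) • π μ y := by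
        rw [← Finset.sum_subset (Finset.subset_insert ν S)]
        · exact Finset.sum_congr rfl fun μ hμ => by rw [if_pos hμ]
        · intro μ _ hμ
          rw [if_neg hμ, smul_zero]
      have h2 : ∑ μ ∈ insert ν S, (c ^ (μ:ℤ)) • (if μ = ν then y else 0)
          = (c ^ (ν:ℤ)) • y := by
        have : ∀ μ ∈ insert ν S, (c ^ (μ:ℤ)) • (if μ = ν then y else 0)
            = if μ = ν then (c ^ (ν:ℤ)) • y else 0 := by
          intro μ _
          by_cases h : μ = ν
          · rw [if_pos h, if_pos h, h]
          · rw [if_neg h, if_neg h, smul_zero]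
        rw [Finset.sum_congr rfl this, Finset.sum_ite_eq' (insert ν S) ν (fun _ => (c ^ (ν:ℤ)) • y),
          if_pos (Finset.mem_insert_self ν S)]
      have h3 : ∑ μ ∈ S, (c ^ (μ:ℤ)) • π μ y = (c ^ (ν:ℤ)) • y := by
        have h4 := hA ρ π S hdecomp a hweight (Real.log c) y
        rw [hy (Real.log c)] at h4
        have h5 : ∀ μ ∈ S, Real.exp ((μ:ℝ) * Real.log c) • π μ y = (c ^ (μ:ℤ)) • π μ y :=
          fun μ _ => by rw [hpow μ c hc]
        rw [Finset.sum_congr rfl h5, hpow ν c hc] at h4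
        exact h4.symm
      simp only [smul_sub]
      rw [Finset.sum_sub_distrib, h1, h2, h3, sub_self])
  constructor
  · intro μ hμ hne
    have h0 : (if μ ∈ S then π μ y else 0) - (if μ = ν then y else 0) = 0 :=
      key μ (Finset.mem_insert_of_mem hμ)
    rw [if_pos hμ, if_neg hne, sub_zero] at h0
    exact h0
  · intro hν
    have h0 : (if ν ∈ S then π ν y else 0) - (if ν = ν then y else 0) = 0 :=
      key ν (Finset.mem_insert_self ν S)
    rw [if_neg hν, if_pos rfl, zero_sub, neg_eq_zero] at h0
    exact h0

lemma hCout : ∀ lam ∉ S, ∀ x : V, π lam x = 0 := by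
  intro lam hlam x
  exact (heig ρ π S hdecomp a hweight lam (π lam x) (fun t => hweight t lam x)).2 hlam

lemma horth : ∀ μ ν : ℤ, μ ≠ ν → ∀ x : V, π μ (π ν x) = 0 := by
  intro μ ν hne x
  by_cases hμ : μ ∈ S
  · exact (heig ρ π S hdecomp a hweight ν (π ν x) (fun t => hweight t ν x)).1 μ hμ hne
  · exact hCout ρ π S hdecomp a hweight μ hμ _

lemma hdiagπ : ∀ ν : ℤ, ∀ x : V, π ν (π ν x) = π ν x := by
  intro ν x
  by_cases hν : ν ∈ S
  · have h := hdecomp (π ν x)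
    rw [Finset.sum_eq_single_of_mem ν hν
      (fun μ hμ hne => horth ρ π S hdecomp a hweight μ ν hne x)] at h
    exact h
  · rw [hCout ρ π S hdecomp a hweight ν hν x]
    exact map_zero _

include ha

lemma hF (r : ℝ) : ∀ c : ℝ, 0 < c → ∀ z : V,
    ρ (us (c^2*r)) z = ∑ p ∈ S ×ˢ S, (c ^ (p.1 - p.2 : ℤ)) • π p.1 (ρ (us r) (π p.2 z)) := by
  intro c hc z
  set t := Real.log c with htdef
  have ht : us (c^2*r) = a t * us r * a (-t) := by
    rw [conj_us a ha t r]
    congr 2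
    rw [two_mul, Real.exp_add, Real.exp_log hc]
    ring
  rw [ht, map_mul, map_mul, Module.End.mul_apply, Module.End.mul_apply]
  have hcoef : ∀ μ ν : ℤ, Real.exp ((ν:ℝ) * (-t)) * Real.exp ((μ:ℝ) * t) = c ^ (μ - ν : ℤ) := by
    intro μ ν
    rw [← Real.exp_add, ← hpow (μ - ν) c hc]
    congr 1
    push_cast
    ring
  calc ρ (a t) (ρ (us r) (ρ (a (-t)) z))
      = ρ (a t) (ρ (us r) (∑ ν ∈ S, Real.exp ((ν:ℝ) * (-t)) • π ν z)) := by
        rw [hA ρ π S hdecomp a hweight (-t) z]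
    _ = ρ (a t) (∑ ν ∈ S, Real.exp ((ν:ℝ) * (-t)) • ρ (us r) (π ν z)) := by
        rw [map_sum]
        simp only [map_smul]
    _ = ∑ ν ∈ S, Real.exp ((ν:ℝ) * (-t)) • ρ (a t) (ρ (us r) (π ν z)) := by
        rw [map_sum]
        simp only [map_smul]
    _ = ∑ ν ∈ S, Real.exp ((ν:ℝ) * (-t)) •
          ∑ μ ∈ S, Real.exp ((μ:ℝ) * t) • π μ (ρ (us r) (π ν z)) :=
        Finset.sum_congr rfl fun ν _ => by
          rw [hA ρ π S hdecomp a hweight t (ρ (us r) (π ν z))]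
    _ = ∑ ν ∈ S, ∑ μ ∈ S, (c ^ (μ - ν : ℤ)) • π μ (ρ (us r) (π ν z)) := by
        refine Finset.sum_congr rfl fun ν _ => ?_
        rw [Finset.smul_sum]
        refine Finset.sum_congr rfl fun μ _ => ?_
        rw [smul_smul, hcoef μ ν]
    _ = ∑ μ ∈ S, ∑ ν ∈ S, (c ^ (μ - ν : ℤ)) • π μ (ρ (us r) (π ν z)) := Finset.sum_comm
    _ = ∑ p ∈ S ×ˢ S, (c ^ (p.1 - p.2 : ℤ)) • π p.1 (ρ (us r) (π p.2 z)) := by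
        rw [Finset.sum_product]

lemma hG (r : ℝ) : ∀ c : ℝ, 0 < c → ∀ z : V,
    ρ (ls (c^2*r)) z = ∑ p ∈ S ×ˢ S, (c ^ (p.2 - p.1 : ℤ)) • π p.1 (ρ (ls r) (π p.2 z)) := by
  intro c hc z
  set t := -Real.log c with htdef
  have ht : ls (c^2*r) = a t * ls r * a (-t) := by
    rw [conj_ls a ha t r]
    congr 2
    rw [show -(2 * t) = Real.log c + Real.log c by rw [htdef]; ring,
      Real.exp_add, Real.exp_log hc]
    ring
  rw [ht, map_mul, map_mul, Module.End.mul_apply, Module.End.mul_apply]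
  have hcoef : ∀ μ ν : ℤ, Real.exp ((ν:ℝ) * (-t)) * Real.exp ((μ:ℝ) * t) = c ^ (ν - μ : ℤ) := by
    intro μ ν
    rw [← Real.exp_add, ← hpow (ν - μ) c hc, htdef]
    congr 1
    push_cast
    ring
  calc ρ (a t) (ρ (ls r) (ρ (a (-t)) z))
      = ρ (a t) (ρ (ls r) (∑ ν ∈ S, Real.exp ((ν:ℝ) * (-t)) • π ν z)) := by
        rw [hA ρ π S hdecomp a hweight (-t) z]
    _ = ρ (a t) (∑ ν ∈ S, Real.exp ((ν:ℝ) * (-t)) • ρ (ls r) (π ν z)) := by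
        rw [map_sum]
        simp only [map_smul]
    _ = ∑ ν ∈ S, Real.exp ((ν:ℝ) * (-t)) • ρ (a t) (ρ (ls r) (π ν z)) := by
        rw [map_sum]
        simp only [map_smul]
    _ = ∑ ν ∈ S, Real.exp ((ν:ℝ) * (-t)) •
          ∑ μ ∈ S, Real.exp ((μ:ℝ) * t) • π μ (ρ (ls r) (π ν z)) :=
        Finset.sum_congr rfl fun ν _ => by
          rw [hA ρ π S hdecomp a hweight t (ρ (ls r) (π ν z))]
    _ = ∑ ν ∈ S, ∑ μ ∈ S, (c ^ (ν - μ : ℤ)) • π μ (ρ (ls r) (π ν z)) := by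
        refine Finset.sum_congr rfl fun ν _ => ?_
        rw [Finset.smul_sum]
        refine Finset.sum_congr rfl fun μ _ => ?_
        rw [smul_smul, hcoef μ ν]
    _ = ∑ μ ∈ S, ∑ ν ∈ S, (c ^ (ν - μ : ℤ)) • π μ (ρ (ls r) (π ν z)) := Finset.sum_comm
    _ = ∑ p ∈ S ×ˢ S, (c ^ (p.2 - p.1 : ℤ)) • π p.1 (ρ (ls r) (π p.2 z)) := by
        rw [Finset.sum_product]


end Main

end Stmt3Aux

end

open Stmt3Aux in
/-- If all nonzero weight components of a nonzero vector `v` have negative weight, then for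
every `r ≠ 0`, `u(r)v` has a nonzero component of strictly positive weight. -/
theorem stmt3 (V : Type*) [AddCommGroup V] [Module ℝ V] [FiniteDimensional ℝ V]
    (ρ : Matrix.SpecialLinearGroup (Fin 2) ℝ →* (V →ₗ[ℝ] V))
    (π : ℤ → (V →ₗ[ℝ] V)) (S : Finset ℤ)
    (hdecomp : ∀ w : V, ∑ lam ∈ S, π lam w = w)
    (a : ℝ → Matrix.SpecialLinearGroup (Fin 2) ℝ)
    (ha : ∀ t, (a t : Matrix (Fin 2) (Fin 2) ℝ) = !![Real.exp t, 0; 0, Real.exp (-t)])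
    (hweight : ∀ (t : ℝ) (lam : ℤ) (w : V),
      ρ (a t) (π lam w) = Real.exp ((lam : ℝ) * t) • π lam w)
    (v : V) (hv : v ≠ 0) (hneg : ∀ lam : ℤ, 0 ≤ lam → π lam v = 0)
    (r : ℝ) (hr : r ≠ 0)
    (u : Matrix.SpecialLinearGroup (Fin 2) ℝ)
    (hu : (u : Matrix (Fin 2) (Fin 2) ℝ) = !![1, r; 0, 1]) :
    ∃ μ : ℤ, 0 < μ ∧ π μ (ρ u v) ≠ 0 := by
  classical
  by_contra hcontra
  push_neg at hcontra
  have horth' := horth ρ π S hdecomp a hweight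
  have hdiag' := hdiagπ ρ π S hdecomp a hweight
  have hC' := hCout ρ π S hdecomp a hweight
  have heig' := heig ρ π S hdecomp a hweight
  have hF' := hF ρ π S hdecomp a ha hweight r
  have hGl := hG ρ π S hdecomp a ha hweight (-1/r)
  have hu_eq : u = us r := Subtype.ext (by rw [hu]; rfl)
  have hinv_us : ∀ (s : ℝ) (x : V), ρ (us (-s)) (ρ (us s) x) = x := by
    intro s x
    rw [← Module.End.mul_apply, ← map_mul, us_mul, neg_add_cancel, us_zero, map_one,
      Module.End.one_apply]
  have hTsurj : Function.Surjective (ρ (us r)) := by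
    intro y
    refine ⟨ρ (us (-r)) y, ?_⟩
    have h0 := hinv_us (-r) y
    rwa [neg_neg] at h0
  have hLsurj : Function.Surjective (ρ (ls (-1/r))) := by
    intro y
    refine ⟨ρ (ls (1/r)) y, ?_⟩
    rw [← Module.End.mul_apply, ← map_mul, ls_mul, (show (-1:ℝ)/r + 1/r = 0 by ring), ls_zero,
      map_one, Module.End.one_apply]
  -- structural facts for T = ρ (us r)
  have hexpT : ∀ c : ℝ, 0 < c → ∀ z : V,
      ∑ p ∈ S ×ˢ S, ((c:ℝ) ^ (p.1 - p.2 : ℤ)) • π p.1 (ρ (us r) (π p.2 (ρ (us r) z)))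
      = ∑ p ∈ S ×ˢ S, ((Real.sqrt (c^2+1)) ^ (p.1 - p.2 : ℤ)) • π p.1 (ρ (us r) (π p.2 z)) := by
    intro c hc z
    have hb : 0 < Real.sqrt (c^2+1) := Real.sqrt_pos.2 (by positivity)
    have hb2 : (Real.sqrt (c^2+1))^2 = c^2 + 1 := Real.sq_sqrt (by positivity)
    rw [← hF' c hc (ρ (us r) z), ← hF' _ hb z]
    rw [← Module.End.mul_apply, ← map_mul, us_mul]
    congr 2
    rw [hb2]
    ring
  obtain ⟨hTriT, hDiagT⟩ := tri_diag π S hdecomp horth' hdiag' hC' (ρ (us r)) hTsurj hexpT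
  -- structural facts for L = ρ (ls (-1/r)), via negated weights
  set Sn := S.image (fun μ => -μ) with hSn
  set πn : ℤ → V →ₗ[ℝ] V := fun lam => π (-lam) with hπn
  have hinj : ∀ x ∈ S, ∀ y ∈ S, -x = -y → x = y := fun x _ y _ h => by omega
  have hdecompn : ∀ w : V, ∑ lam ∈ Sn, πn lam w = w := by
    intro w
    rw [hSn, Finset.sum_image hinj]
    simpa [hπn] using hdecomp w
  have horthn : ∀ μ ν : ℤ, μ ≠ ν → ∀ x : V, πn μ (πn ν x) = 0 :=
    fun μ ν h x => horth' (-μ) (-ν) (by omega) x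
  have hdiagn : ∀ ν : ℤ, ∀ x : V, πn ν (πn ν x) = πn ν x := fun ν x => hdiag' (-ν) x
  have hCn : ∀ lam ∉ Sn, ∀ x : V, πn lam x = 0 := by
    intro lam hlam x
    refine hC' (-lam) (fun hmem => hlam ?_) x
    rw [hSn]
    exact Finset.mem_image.2 ⟨-lam, hmem, by omega⟩
  have reidx : ∀ (f : ℤ → ℤ → V),
      ∑ p ∈ Sn ×ˢ Sn, f p.1 p.2 = ∑ μ ∈ S, ∑ ν ∈ S, f (-μ) (-ν) := by
    intro f
    rw [Finset.sum_product, hSn, Finset.sum_image hinj]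
    exact Finset.sum_congr rfl fun μ _ => Finset.sum_image hinj
  have key : ∀ (d : ℝ), 0 < d → ∀ z : V,
      ∑ μ ∈ S, ∑ ν ∈ S, (d ^ ((-μ) - (-ν) : ℤ)) • πn (-μ) (ρ (ls (-1/r)) (πn (-ν) z))
      = ρ (ls (d^2*(-1/r))) z := by
    intro d hd z
    rw [hGl d hd z, Finset.sum_product]
    refine Finset.sum_congr rfl fun μ _ => Finset.sum_congr rfl fun ν _ => ?_
    simp only [hπn, neg_neg]
    rw [show (-μ) - (-ν) = ν - μ by omega]
  have hexpL : ∀ c : ℝ, 0 < c → ∀ z : V,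
      ∑ p ∈ Sn ×ˢ Sn, ((c:ℝ) ^ (p.1 - p.2 : ℤ)) • πn p.1 (ρ (ls (-1/r)) (πn p.2 (ρ (ls (-1/r)) z)))
      = ∑ p ∈ Sn ×ˢ Sn, ((Real.sqrt (c^2+1)) ^ (p.1 - p.2 : ℤ)) • πn p.1 (ρ (ls (-1/r)) (πn p.2 z)) := by
    intro c hc z
    have hb : 0 < Real.sqrt (c^2+1) := Real.sqrt_pos.2 (by positivity)
    have hb2 : (Real.sqrt (c^2+1))^2 = c^2 + 1 := Real.sq_sqrt (by positivity)
    rw [reidx (fun x y => (c ^ (x - y : ℤ)) • πn x (ρ (ls (-1/r)) (πn y (ρ (ls (-1/r)) z)))),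
      reidx (fun x y => ((Real.sqrt (c^2+1)) ^ (x - y : ℤ)) • πn x (ρ (ls (-1/r)) (πn y z)))]
    rw [key c hc (ρ (ls (-1/r)) z), key _ hb z]
    rw [← Module.End.mul_apply, ← map_mul, ls_mul]
    congr 2
    rw [hb2]
    ring
  obtain ⟨hTriLn, _⟩ := tri_diag πn Sn hdecompn horthn hdiagn hCn (ρ (ls (-1/r))) hLsurj hexpL
  have hTriL : ∀ μ ν : ℤ, ν < μ → ∀ x : V, π μ (ρ (ls (-1/r)) (π ν x)) = 0 := by
    intro μ ν h x
    have h0 := hTriLn (-μ) (-ν) (by omega) x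
    simpa [hπn] using h0
  -- endgame
  have hy1pos : ∀ μ : ℤ, 0 < μ → π μ (ρ (us r) v) = 0 := by
    intro μ hμ
    rw [← hu_eq]
    exact hcontra μ hμ
  have hy1ne : ρ (us r) v ≠ 0 := by
    intro h
    apply hv
    have h0 := hinv_us r v
    rw [h, map_zero] at h0
    exact h0.symm
  have hy2pos : ∀ μ : ℤ, 0 < μ → π μ (ρ (ls (-1/r)) (ρ (us r) v)) = 0 := by
    intro μ hμ
    conv_lhs => rw [← hdecomp (ρ (us r) v)]
    rw [map_sum, map_sum]
    apply Finset.sum_eq_zero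
    intro ν hν
    rcases le_or_gt ν 0 with h | h
    · exact hTriL μ ν (by omega) _
    · rw [hy1pos ν h, map_zero, map_zero]
  have hy2ne : ρ (ls (-1/r)) (ρ (us r) v) ≠ 0 := by
    intro h
    apply hy1ne
    have h2 : ρ (ls (1/r)) (ρ (ls (-1/r)) (ρ (us r) v)) = ρ (us r) v := by
      rw [← Module.End.mul_apply, ← map_mul, ls_mul, (show (1:ℝ)/r + -1/r = 0 by ring), ls_zero,
        map_one, Module.End.one_apply]
    rw [h, map_zero] at h2
    exact h2.symm
  set y2 := ρ (ls (-1/r)) (ρ (us r) v) with hy2def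
  set K := S.filter (fun lam => π lam y2 ≠ 0) with hK
  have hKne : K.Nonempty := by
    by_contra hempty
    rw [Finset.not_nonempty_iff_eq_empty] at hempty
    apply hy2ne
    have h0 : ∑ lam ∈ S, π lam y2 = 0 := Finset.sum_eq_zero (fun lam hlam => by
      by_contra hne'
      have hmem : lam ∈ K := Finset.mem_filter.2 ⟨hlam, hne'⟩
      rw [hempty] at hmem
      exact absurd hmem (Finset.notMem_empty lam))
    rw [hdecomp y2] at h0
    exact h0
  set β := K.min' hKne with hβ
  have hβK : β ∈ K := K.min'_mem hKne
  have hβS : β ∈ S := (Finset.mem_filter.1 hβK).1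
  have hβne : π β y2 ≠ 0 := (Finset.mem_filter.1 hβK).2
  have hβ0 : β ≤ 0 := by
    by_contra h
    exact hβne (hy2pos β (by omega))
  have hβmin : ∀ lam ∈ S, lam < β → π lam y2 = 0 := by
    intro lam hlam hlt
    by_contra hne'
    have hmem : lam ∈ K := Finset.mem_filter.2 ⟨hlam, hne'⟩
    have := K.min'_le lam hmem
    omega
  have hy3β : π β (ρ (us r) y2) = π β y2 := by
    conv_lhs => rw [← hdecomp y2]
    rw [map_sum, map_sum]
    rw [Finset.sum_eq_single_of_mem β hβS (fun lam hlam hne' => by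
      rcases lt_or_gt_of_ne hne' with h | h
      · rw [hβmin lam hlam h, map_zero, map_zero]
      · exact hTriT β lam h y2)]
    exact hDiagT β y2
  have hwv : ρ (us r) y2 = ρ (us r * ls (-1/r) * us r) v := by
    rw [hy2def, map_mul, map_mul, Module.End.mul_apply, Module.End.mul_apply]
  have hswap : ∀ (lam : ℤ) (x : V) (t : ℝ),
      ρ (a t) (ρ (us r * ls (-1/r) * us r) (π lam x))
      = Real.exp (((-lam : ℤ) : ℝ) * t) • ρ (us r * ls (-1/r) * us r) (π lam x) := by
    intro lam x t
    have hg : a t * (us r * ls (-1/r) * us r) = (us r * ls (-1/r) * us r) * a (-t) := by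
      have h0 := w_swap a ha r hr (-t)
      rw [neg_neg] at h0
      exact h0.symm
    rw [← Module.End.mul_apply, ← map_mul, hg, map_mul, Module.End.mul_apply, hweight (-t) lam x,
      map_smul]
    congr 1
    push_cast
    ring
  have hfinal : π β (ρ (us r * ls (-1/r) * us r) v) = 0 := by
    conv_lhs => rw [← hdecomp v]
    rw [map_sum, map_sum]
    apply Finset.sum_eq_zero
    intro lam hlam
    rcases le_or_gt 0 lam with h | h
    · rw [hneg lam h, map_zero, map_zero]
    · exact (heig' (-lam) (ρ (us r * ls (-1/r) * us r) (π lam v))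
        (hswap lam v)).1 β hβS (by omega)
  rw [← hwv, hy3β] at hfinal
  exact hβne hfinal
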